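/- Let f ∈ ℱ and let (X,σ) be a metric space with a convex geodesic bicombing. Then for any two σ-geodesic lines γ, γ', d(γ(0), γ'(0)) ≤ ∫_{-∞}^{∞} d(γ(s), γ'(s)) f(s) ds. Consequently the formula f(γ,γ') = ∫_{-∞}^{∞} d(γ(s),γ'(s)) f(s) ds defines a metric on the set of σ-geodesic lines for which the evaluation map γ ↦ γ(0) is 1-Lipschitz. -/
import Mathlib


open MeasureTheory

/-- A convex geodesic bicombing on a metric space `X`. -/
structure ConvexBicombing (X : Type*) [MetricSpace X] where
  σ : X → X → ℝ → X
  source : ∀ x y, σ x y 0 = x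
  target : ∀ x y, σ x y 1 = y
  geodesic : ∀ x y, ∀ s ∈ Set.Icc (0 : ℝ) 1, ∀ t ∈ Set.Icc (0 : ℝ) 1,
    dist (σ x y s) (σ x y t) = |s - t| * dist x y
  convex : ∀ x y x' y', ConvexOn ℝ (Set.Icc (0 : ℝ) 1)
    (fun t => dist (σ x y t) (σ x' y' t))

/-- A geodesic line: an isometric embedding `ℝ → X`. -/
def IsGeodLine {X : Type*} [MetricSpace X] (γ : ℝ → X) : Prop :=
  ∀ s t : ℝ, dist (γ s) (γ t) = |s - t|

/-- A `σ`-geodesic line. -/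
def IsSigmaLine {X : Type*} [MetricSpace X] (B : ConvexBicombing X) (γ : ℝ → X) : Prop :=
  IsGeodLine γ ∧ ∀ s t : ℝ, s ≤ t → ∀ u ∈ Set.Icc (0 : ℝ) 1,
    B.σ (γ s) (γ t) u = γ (s + u * (t - s))

lemma geod_continuous {X : Type*} [MetricSpace X] {γ : ℝ → X} (h : IsGeodLine γ) :
    Continuous γ := by
  have : LipschitzWith 1 γ := LipschitzWith.of_dist_le_mul fun s t => by
    rw [h s t, Real.dist_eq]; simp
  exact this.continuous

lemma dist_convex {X : Type*} [MetricSpace X] (B : ConvexBicombing X) {γ γ' : ℝ → X}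
    (hγ : IsSigmaLine B γ) (hγ' : IsSigmaLine B γ') :
    ConvexOn ℝ Set.univ (fun s => dist (γ s) (γ' s)) := by
  have key : ∀ x y : ℝ, x ≤ y → ∀ a b : ℝ, 0 ≤ a → 0 ≤ b → a + b = 1 →
      dist (γ (a * x + b * y)) (γ' (a * x + b * y)) ≤
        a * dist (γ x) (γ' x) + b * dist (γ y) (γ' y) := by
    intro x y hxy a b ha hb hab
    have hb1 : b ≤ 1 := by linarith
    have hmem0 : (0 : ℝ) ∈ Set.Icc (0 : ℝ) 1 := by constructor <;> norm_num
    have hmem1 : (1 : ℝ) ∈ Set.Icc (0 : ℝ) 1 := by constructor <;> norm_num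
    have hc := (B.convex (γ x) (γ y) (γ' x) (γ' y)).2 hmem0 hmem1 ha hb hab
    simp only [smul_eq_mul, mul_zero, mul_one, zero_add] at hc
    rw [B.source, B.source, B.target, B.target,
      hγ.2 x y hxy b ⟨hb, hb1⟩, hγ'.2 x y hxy b ⟨hb, hb1⟩] at hc
    have harg : a * x + b * y = x + b * (y - x) := by
      have ha' : a = 1 - b := by linarith
      subst ha'; ring
    rw [harg]
    exact hc
  constructor
  · exact convex_univ
  · intro x _ y _ a b ha hb hab
    simp only [smul_eq_mul]
    rcases le_total x y with h | h
    · exact key x y h a b ha hb hab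
    · have := key y x h b a hb ha (by linarith)
      calc dist (γ (a * x + b * y)) (γ' (a * x + b * y))
          = dist (γ (b * y + a * x)) (γ' (b * y + a * x)) := by rw [add_comm]
        _ ≤ b * dist (γ y) (γ' y) + a * dist (γ x) (γ' x) := this
        _ = a * dist (γ x) (γ' x) + b * dist (γ y) (γ' y) := by ring

lemma integ_gf {X : Type*} [MetricSpace X] {γ γ' : ℝ → X}
    (hγ : IsGeodLine γ) (hγ' : IsGeodLine γ')
    (f : ℝ → ℝ) (hcont : Continuous f) (hpos : ∀ s, 0 < f s)
    (hint : Integrable f) (hmom : Integrable (fun s => 2 * |s| * f s)) :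
    Integrable (fun s => dist (γ s) (γ' s) * f s) := by
  have hgc : Continuous (fun s => dist (γ s) (γ' s)) :=
    (geod_continuous hγ).dist (geod_continuous hγ')
  refine (hmom.add (hint.const_mul (dist (γ 0) (γ' 0)))).mono'
    (hgc.mul hcont).aestronglyMeasurable (Filter.Eventually.of_forall fun s => ?_)
  have hb : dist (γ s) (γ' s) ≤ 2 * |s| + dist (γ 0) (γ' 0) := by
    have h4 := dist_triangle4 (γ s) (γ 0) (γ' 0) (γ' s)
    rw [hγ s 0, hγ' 0 s] at h4
    simp only [sub_zero, zero_sub, abs_neg] at h4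
    linarith
  have hfs := (hpos s).le
  have hds := dist_nonneg (x := γ s) (y := γ' s)
  rw [Real.norm_eq_abs, abs_of_nonneg (mul_nonneg hds hfs)]
  simp only [Pi.add_apply]
  nlinarith [mul_le_mul_of_nonneg_right hb hfs]

/-- Let `f ∈ ℱ` (continuous, positive, even, `∫ f = 1`, finite first
moment) and let `X` carry a convex geodesic bicombing. For any two `σ`-geodesic lines,
`d(γ(0), γ'(0)) ≤ ∫ d(γ(s), γ'(s)) f(s) ds`; consequently
`f(γ, γ') = ∫ d(γ(s), γ'(s)) f(s) ds` is a metric on the set of `σ`-geodesic lines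
(symmetric, triangle inequality, separating points) for which the evaluation map
`γ ↦ γ(0)` is 1-Lipschitz. -/
theorem fdist_is_metric_eval_lipschitz {X : Type*} [MetricSpace X] (B : ConvexBicombing X)
    (f : ℝ → ℝ) (hcont : Continuous f) (hpos : ∀ s, 0 < f s) (heven : ∀ s, f (-s) = f s)
    (hint : Integrable f) (hone : ∫ s, f s = 1)
    (hmom : Integrable (fun s => 2 * |s| * f s)) :
    (∀ γ γ' : ℝ → X, IsSigmaLine B γ → IsSigmaLine B γ' →
        dist (γ 0) (γ' 0) ≤ ∫ s, dist (γ s) (γ' s) * f s) ∧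
    (∀ γ γ' : ℝ → X, IsSigmaLine B γ → IsSigmaLine B γ' →
        ∫ s, dist (γ s) (γ' s) * f s = ∫ s, dist (γ' s) (γ s) * f s) ∧
    (∀ γ γ' γ'' : ℝ → X, IsSigmaLine B γ → IsSigmaLine B γ' → IsSigmaLine B γ'' →
        ∫ s, dist (γ s) (γ'' s) * f s ≤
          (∫ s, dist (γ s) (γ' s) * f s) + ∫ s, dist (γ' s) (γ'' s) * f s) ∧
    (∀ γ γ' : ℝ → X, IsSigmaLine B γ → IsSigmaLine B γ' →
        (∫ s, dist (γ s) (γ' s) * f s) = 0 → γ = γ') := by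

  refine ⟨?_, ?_, ?_, ?_⟩
  · -- evaluation is 1-Lipschitz
    intro γ γ' hγ hγ'
    set g : ℝ → ℝ := fun s => dist (γ s) (γ' s) with hg
    have h1 : Integrable (fun s => g s * f s) := integ_gf hγ.1 hγ'.1 f hcont hpos hint hmom
    have h2 : Integrable (fun s => g (-s) * f s) := by
      have := h1.comp_neg
      simpa only [heven] using this
    have hneg : ∫ s, g (-s) * f s = ∫ s, g s * f s := by
      have := integral_neg_eq_self (fun s => g s * f s) volume
      simpa only [heven] using this
    have hconv := dist_convex B hγ hγ'
    calc dist (γ 0) (γ' 0) = ∫ s, g 0 * f s := by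
          rw [integral_const_mul, hone, mul_one]
      _ ≤ ∫ s, (g s * f s + g (-s) * f s) / 2 := by
          refine integral_mono (hint.const_mul _) ((h1.add h2).div_const 2) fun s => ?_
          have hc := hconv.2 (Set.mem_univ s) (Set.mem_univ (-s))
            (by norm_num : (0:ℝ) ≤ 1/2) (by norm_num : (0:ℝ) ≤ 1/2) (by norm_num)
          simp only [smul_eq_mul] at hc
          have harg : (1/2 : ℝ) * s + (1/2) * (-s) = 0 := by ring
          rw [harg] at hc
          have hfs := (hpos s).le
          nlinarith [mul_le_mul_of_nonneg_right hc hfs]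
      _ = ∫ s, g s * f s := by
          rw [integral_div, integral_add h1 h2, hneg]; ring
  · -- symmetry
    intro γ γ' _ _
    simp_rw [dist_comm]
  · -- triangle
    intro γ γ' γ'' hγ hγ' hγ''
    have h1 := integ_gf hγ.1 hγ'.1 f hcont hpos hint hmom
    have h2 := integ_gf hγ'.1 hγ''.1 f hcont hpos hint hmom
    rw [← integral_add h1 h2]
    refine integral_mono (integ_gf hγ.1 hγ''.1 f hcont hpos hint hmom) (h1.add h2) fun s => ?_
    have := dist_triangle (γ s) (γ' s) (γ'' s)
    have hfs := (hpos s).le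
    nlinarith [mul_le_mul_of_nonneg_right this hfs]
  · -- separation
    intro γ γ' hγ hγ' hz
    have h1 : Integrable (fun s => dist (γ s) (γ' s) * f s) :=
      integ_gf hγ.1 hγ'.1 f hcont hpos hint hmom
    have hnn : 0 ≤ fun s => dist (γ s) (γ' s) * f s :=
      fun s => mul_nonneg dist_nonneg (hpos s).le
    have hae : (fun s => dist (γ s) (γ' s) * f s) =ᵐ[volume] 0 :=
      (integral_eq_zero_iff_of_nonneg hnn h1).mp hz
    have hgc : Continuous (fun s => dist (γ s) (γ' s) * f s) :=
      ((geod_continuous hγ.1).dist (geod_continuous hγ'.1)).mul hcont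
    have heq : (fun s => dist (γ s) (γ' s) * f s) = 0 :=
      (Continuous.ae_eq_iff_eq volume hgc continuous_const).mp hae
    funext s
    have hs : dist (γ s) (γ' s) * f s = 0 := congrFun heq s
    have : dist (γ s) (γ' s) = 0 := by
      rcases mul_eq_zero.mp hs with h | h
      · exact h
      · exact absurd h (hpos s).ne'
    exact dist_eq_zero.mp this
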